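/- Let N ≥ 2 and α ∈ (0,N). For all points X, Y, Z ∈ ℝ^N with X ≠ Y and X ≠ Z, one has the inequality |X−Y|^{α−N} − |X−Z|^{α−N} ≤ (N−α+1) · min(1, |Y−Z|) / min( |X−Y|^{N−α}, |X−Y|^{N−α+1} ). -/
import Mathlib

lemma bern_aux (β t : ℝ) (hβ : 0 < β) (ht0 : 0 < t) (ht1 : t ≤ 1) :
    1 - t ^ β ≤ (β + 1) * (1 - t) := by
  rcases le_or_gt 1 β with h | h
  · have hb := one_add_mul_self_le_rpow_one_add (s := t - 1) (by linarith) h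
    have ht : (1 : ℝ) + (t - 1) = t := by ring
    rw [ht] at hb
    nlinarith
  · have h2 : t ^ (1 : ℝ) ≤ t ^ β := Real.rpow_le_rpow_of_exponent_ge ht0 ht1 h.le
    rw [Real.rpow_one] at h2
    nlinarith

/-- For `N ≥ 2`, `α ∈ (0,N)` and points `X ≠ Y`, `X ≠ Z` in `ℝ^N`,
`|X−Y|^{α−N} − |X−Z|^{α−N} ≤ (N−α+1) · min(1,|Y−Z|) / min(|X−Y|^{N−α}, |X−Y|^{N−α+1})`. -/
theorem riesz_kernel_diff_le (N : ℕ) (hN : 2 ≤ N) (α : ℝ)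
    (hα : α ∈ Set.Ioo (0 : ℝ) N)
    (X Y Z : EuclideanSpace ℝ (Fin N)) (hXY : X ≠ Y) (hXZ : X ≠ Z) :
    ‖X - Y‖ ^ (α - N) - ‖X - Z‖ ^ (α - N) ≤
      ((N : ℝ) - α + 1) * min 1 ‖Y - Z‖ /
        min (‖X - Y‖ ^ ((N : ℝ) - α)) (‖X - Y‖ ^ ((N : ℝ) - α + 1)) := by
  obtain ⟨hα0, hαN⟩ := hα
  set a := ‖X - Y‖ with ha_def
  set b := ‖X - Z‖ with hb_def
  set d := ‖Y - Z‖ with hd_def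
  have ha : 0 < a := by
    rw [ha_def, norm_sub_pos_iff]; exact hXY
  have hb : 0 < b := by
    rw [hb_def, norm_sub_pos_iff]; exact hXZ
  have hd : 0 ≤ d := norm_nonneg _
  have htri : b ≤ a + d := by
    have := norm_sub_le_norm_sub_add_norm_sub X Y Z
    simpa using this
  set β := (N : ℝ) - α with hβ_def
  have hβ : 0 < β := by simp [hβ_def]; linarith
  have hαN' : α - (N : ℝ) = -β := by ring
  rw [hαN']
  have haβ : 0 < a ^ β := Real.rpow_pos_of_pos ha β
  have hbβ : 0 < b ^ β := Real.rpow_pos_of_pos hb β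
  have hmina : 0 < min 1 a := lt_min one_pos ha
  have hmind : 0 ≤ min 1 d := le_min zero_le_one hd
  have hmin : min (a ^ β) (a ^ (β + 1)) = a ^ β * min 1 a := by
    rw [Real.rpow_add ha, Real.rpow_one]
    rcases le_total 1 a with h | h
    · rw [min_eq_left, min_eq_left h, mul_one]
      nlinarith
    · rw [min_eq_right, min_eq_right h]
      nlinarith
  rw [hmin]
  have hRHS_pos : 0 < a ^ β * min 1 a := mul_pos haβ hmina
  rcases le_or_gt b a with hba | hab
  · -- easy case : LHS ≤ 0 ≤ RHS
    have h1 : a ^ (-β) ≤ b ^ (-β) :=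
      Real.rpow_le_rpow_of_nonpos hb hba (by linarith)
    have h2 : (0:ℝ) ≤ (β + 1) * min 1 d / (a ^ β * min 1 a) := by
      apply div_nonneg _ hRHS_pos.le
      positivity
    linarith
  · -- main case : a < b
    have hba' : 0 < b - a := by linarith
    set t := a / b with ht_def
    have ht0 : 0 < t := div_pos ha hb
    have ht1 : t ≤ 1 := by
      rw [ht_def, div_le_one hb]; exact hab.le
    have key : a ^ (-β) - b ^ (-β) = a ^ (-β) * (1 - t ^ β) := by
      rw [ht_def, Real.div_rpow ha.le hb.le, Real.rpow_neg ha.le, Real.rpow_neg hb.le]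
      field_simp
    have h1 : 1 - t ^ β ≤ (β + 1) * (1 - t) := bern_aux β t hβ ht0 ht1
    have ht2 : 1 - t = (b - a) / b := by
      rw [ht_def]; field_simp
    have h2 : (b - a) / b ≤ min 1 d / min 1 a := by
      have hbd : b - a ≤ d := by linarith
      have hstep : (b - a) / b ≤ min 1 (b - a) / min 1 a := by
        rcases le_total (b - a) 1 with h | h
        · rw [min_eq_right h]
          apply div_le_div_of_nonneg_left hba'.le hmina
          exact le_trans (min_le_right 1 a) hab.le
        · rw [min_eq_left h]
          have e1 : (b - a) / b ≤ 1 := by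
            rw [div_le_one hb]; linarith
          have e2 : (1:ℝ) ≤ 1 / min 1 a := by
            rw [le_div_iff₀ hmina, one_mul]; exact min_le_left 1 a
          linarith
      have hstep2 : min 1 (b - a) / min 1 a ≤ min 1 d / min 1 a := by
        gcongr
      linarith
    have haneg : 0 < a ^ (-β) := Real.rpow_pos_of_pos ha _
    have hchain : a ^ (-β) - b ^ (-β) ≤ a ^ (-β) * ((β + 1) * (min 1 d / min 1 a)) := by
      rw [key]
      apply mul_le_mul_of_nonneg_left _ haneg.le
      calc 1 - t ^ β ≤ (β + 1) * (1 - t) := h1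
        _ = (β + 1) * ((b - a) / b) := by rw [ht2]
        _ ≤ (β + 1) * (min 1 d / min 1 a) := by
            apply mul_le_mul_of_nonneg_left h2 (by linarith)
    have hfinal : a ^ (-β) * ((β + 1) * (min 1 d / min 1 a)) =
        (β + 1) * min 1 d / (a ^ β * min 1 a) := by
      rw [Real.rpow_neg ha.le]
      field_simp
    linarith [hchain, hfinal ▸ hchain]
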